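/- Let k ≥ 2 be an integer, let n_A be a positive integer and set n_B = 1. Let V_AB be a real symmetric (2n_A+2)×(2n_A+2) matrix satisfying the bona fide condition V_AB ≥ iΩ_{n_A+1}. If the complex Hermitian matrix V_AB − (iΩ_{n_A} ⊕ (−(1−2/k)·i·Ω_1)) is positive semidefinite, then there exists a real symmetric 2×2 matrix Δ with Δ ≥ iΩ_1 such that the complex Hermitian matrix V_AB − (iΩ_{n_A} ⊕ ((1−1/k)·Δ + (i/k)·Ω_1)) is positive semidefinite. In other words, for a single-mode B system the simplified condition V_AB ≥ iΩ_{n_A} ⊕ (−(1−2/k)·iΩ_1) is necessary and sufficient for the semidefinite k-extendibility criterion. -/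

import Mathlib

open Matrix Complex ComplexOrder

section Aux

set_option linter.unusedSectionVars false

variable {m p : Type*} [Fintype m] [Fintype p] [DecidableEq m] [DecidableEq p]

lemma star_sum_elim (x : m → ℂ) (y : p → ℂ) :
    star (Sum.elim x y) = Sum.elim (star x) (star y) := by
  funext i; cases i <;> rfl

lemma quad_identity (M : Matrix m m ℂ) (X : Matrix m p ℂ) (C : Matrix p p ℂ)
    (Y : Matrix m p ℂ) (hM : Mᴴ = M) (hY : M * Y = X) (x : m → ℂ) (y : p → ℂ) :
    star (Sum.elim x y) ⬝ᵥ (fromBlocks M X Xᴴ C) *ᵥ (Sum.elim x y)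
      = star (x + Y *ᵥ y) ⬝ᵥ (M *ᵥ (x + Y *ᵥ y))
        + star y ⬝ᵥ ((C - Yᴴ * M * Y) *ᵥ y) := by
  have hX : Xᴴ = Yᴴ * M := by rw [← hY, conjTranspose_mul, hM]
  subst hY
  rw [star_sum_elim, fromBlocks_mulVec, sumElim_dotProduct_sumElim, hX]
  simp only [star_add, star_mulVec, mulVec_add, sub_mulVec, dotProduct_add,
    add_dotProduct, dotProduct_sub, ← mulVec_mulVec, ← dotProduct_mulVec,
    Sum.elim_comp_inl, Sum.elim_comp_inr]
  ring

lemma psd_of_blocks {M : Matrix m m ℂ} {X : Matrix m p ℂ} {C : Matrix p p ℂ}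
    {Y : Matrix m p ℂ} (hMpsd : M.PosSemidef) (hC : Cᴴ = C) (hY : M * Y = X)
    (hT : (C - Yᴴ * M * Y).PosSemidef) :
    (fromBlocks M X Xᴴ C).PosSemidef := by
  have hM : Mᴴ = M := hMpsd.isHermitian
  apply Matrix.PosSemidef.of_dotProduct_mulVec_nonneg
  · show _ᴴ = _
    rw [fromBlocks_conjTranspose, hM, hC, conjTranspose_conjTranspose]
  · intro z
    have hz : Sum.elim (z ∘ Sum.inl) (z ∘ Sum.inr) = z := Sum.elim_comp_inl_inr z
    rw [← hz, quad_identity M X C Y hM hY]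
    exact add_nonneg (hMpsd.dotProduct_mulVec_nonneg _) (hT.dotProduct_mulVec_nonneg _)

lemma blocks_psd_T {M : Matrix m m ℂ} {X : Matrix m p ℂ} {C : Matrix p p ℂ}
    {Y : Matrix m p ℂ} (hN : (fromBlocks M X Xᴴ C).PosSemidef)
    (hM : Mᴴ = M) (hY : M * Y = X) :
    (C - Yᴴ * M * Y).PosSemidef := by
  apply Matrix.PosSemidef.of_dotProduct_mulVec_nonneg
  · show _ᴴ = _
    have hC : Cᴴ = C := by
      have := hN.isHermitian
      rw [Matrix.IsHermitian, fromBlocks_conjTranspose] at this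
      have := congrArg Matrix.toBlocks₂₂ this
      simpa using this
    rw [conjTranspose_sub, hC]
    congr 1
    rw [conjTranspose_mul, conjTranspose_mul, hM, conjTranspose_conjTranspose]
    rw [Matrix.mul_assoc]
  · intro y
    have := hN.dotProduct_mulVec_nonneg (Sum.elim (-(Y *ᵥ y)) y)
    rw [quad_identity M X C Y hM hY] at this
    simpa using this

lemma exists_solution {M : Matrix m m ℂ} (hM : M.IsHermitian) (c : m → ℂ)
    (h : ∀ x, M *ᵥ x = 0 → star x ⬝ᵥ c = 0) : ∃ y, M *ᵥ y = c := by
  set f := Matrix.toEuclideanLin M with hf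
  have hsym : f.IsSymmetric := (Matrix.isHermitian_iff_isSymmetric).mp hM
  have happ : ∀ v : EuclideanSpace ℂ m, f v = M *ᵥ v := fun v => rfl
  have h1 : (LinearMap.range f)ᗮ ≤ LinearMap.ker f := by
    intro v hv
    rw [Submodule.mem_orthogonal] at hv
    have h3 : (inner ℂ (f (f v)) v : ℂ) = 0 := hv (f (f v)) (LinearMap.mem_range_self f (f v))
    have h2 : (inner ℂ (f v) (f v) : ℂ) = 0 := by
      rw [hsym v (f v), ← inner_conj_symm, h3, map_zero]
    rw [LinearMap.mem_ker]
    exact inner_self_eq_zero.mp h2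
  have h2 : (LinearMap.ker f)ᗮ ≤ LinearMap.range f := by
    calc (LinearMap.ker f)ᗮ ≤ ((LinearMap.range f)ᗮ)ᗮ := Submodule.orthogonal_le h1
    _ = LinearMap.range f := Submodule.orthogonal_orthogonal _
  have hc : ((WithLp.equiv 2 (m → ℂ)).symm c) ∈ (LinearMap.ker f)ᗮ := by
    rw [Submodule.mem_orthogonal]
    intro u hu
    rw [LinearMap.mem_ker] at hu
    have hu' : M *ᵥ u = 0 := by rw [← happ u, hu]; rfl
    simpa [PiLp.inner_apply, dotProduct, mul_comm] using h u hu'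
  obtain ⟨y, hy⟩ := h2 hc
  refine ⟨y, ?_⟩
  rw [← happ y, hy]
  rfl

lemma blocks_ker {M : Matrix m m ℂ} {X : Matrix m p ℂ}
    {C : Matrix p p ℂ} (hN : (fromBlocks M X Xᴴ C).PosSemidef)
    (x : m → ℂ) (hx : M *ᵥ x = 0) (y : p → ℂ) : star x ⬝ᵥ X *ᵥ y = 0 := by
  set w : ℂ := star x ⬝ᵥ X *ᵥ y with hw
  by_contra hw0
  set c : ℂ := star y ⬝ᵥ C *ᵥ y with hc
  have hconj : star y ⬝ᵥ Xᴴ *ᵥ x = star w := by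
    rw [dotProduct_mulVec, ← star_mulVec, hw]
    exact star_dotProduct (X *ᵥ y) x
  have key : ∀ t : ℂ, 0 ≤ star t * w + t * star w + c := by
    intro t
    have h0 := hN.dotProduct_mulVec_nonneg (Sum.elim (t • x) y)
    have hstar : star (Sum.elim (t • x) y) = Sum.elim (star (t • x)) (star y) := by
      funext i; cases i <;> rfl
    rw [hstar, fromBlocks_mulVec, sumElim_dotProduct_sumElim] at h0
    simp only [Sum.elim_comp_inl, Sum.elim_comp_inr] at h0
    rw [mulVec_smul, hx, smul_zero, zero_add, mulVec_smul, dotProduct_add,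
      dotProduct_smul, hconj, star_smul, smul_dotProduct, ← hw, ← hc] at h0
    simpa [smul_eq_mul, add_assoc] using h0
  have hc0 : 0 ≤ c.re := by
    have := key 0
    simp only [star_zero, zero_mul, zero_add, mul_zero] at this
    exact (Complex.nonneg_iff.mp this).1
  have hN0 : 0 < Complex.normSq w := by
    simpa [Complex.normSq_pos] using hw0
  set r : ℝ := (c.re + 1) / (2 * Complex.normSq w) with hr
  have := key (-(r : ℂ) * w)
  rw [Complex.nonneg_iff] at this
  have hre := this.1
  have hexp : (star (-(r:ℂ) * w) * w + (-(r:ℂ) * w) * star w + c)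
      = c - (2 * r * Complex.normSq w : ℝ) := by
    simp only [Complex.star_def, _root_.map_mul, map_neg, Complex.conj_ofReal]
    rw [Complex.ext_iff]
    simp only [Complex.add_re, Complex.add_im, Complex.sub_re, Complex.sub_im, Complex.mul_re,
      Complex.mul_im, Complex.neg_re, Complex.neg_im, Complex.ofReal_re, Complex.ofReal_im,
      Complex.conj_re, Complex.conj_im, Complex.normSq_apply]
    constructor <;> ring
  rw [hexp] at hre
  simp only [Complex.sub_re, Complex.ofReal_re] at hre
  have hrN : 2 * r * Complex.normSq w = c.re + 1 := by
    rw [hr]; field_simp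
  linarith

lemma psd2_of {P : Matrix (Fin 2) (Fin 2) ℂ} (hP : P.IsHermitian)
    (ha : 0 ≤ (P 0 0).re) (hb : 0 ≤ (P 1 1).re)
    (hab : Complex.normSq (P 0 1) ≤ (P 0 0).re * (P 1 1).re) : P.PosSemidef := by
  have h00 : P 0 0 = ((P 0 0).re : ℂ) := (hP.coe_re_apply_self 0).symm
  have h11 : P 1 1 = ((P 1 1).re : ℂ) := (hP.coe_re_apply_self 1).symm
  have h10 : P 1 0 = star (P 0 1) := (hP.apply 1 0).symm
  refine Matrix.PosSemidef.of_dotProduct_mulVec_nonneg hP fun x => ?_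
  set a := (P 0 0).re
  set b := (P 1 1).re
  set c := P 0 1
  set z : ℂ := star (x 0) * c * x 1 with hz
  have hval : star x ⬝ᵥ P *ᵥ x
      = ((a * Complex.normSq (x 0) + b * Complex.normSq (x 1) + 2 * z.re : ℝ) : ℂ) := by
    simp only [dotProduct, mulVec, Fin.sum_univ_two, Pi.star_apply]
    rw [h00, h11, h10]
    rw [Complex.ext_iff]
    simp only [Complex.add_re, Complex.add_im, Complex.mul_re, Complex.mul_im,
      Complex.ofReal_re, Complex.ofReal_im, Complex.normSq_apply, Pi.star_apply,
      Complex.star_def, Complex.conj_re, Complex.conj_im, hz]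
    constructor <;> ring
  rw [hval, Complex.zero_le_real]
  have hzsq : z.re ^ 2 ≤ Complex.normSq (x 0) * Complex.normSq c * Complex.normSq (x 1) := by
    have h1 : z.re ^ 2 ≤ Complex.normSq z := by
      have := Complex.normSq_apply z
      nlinarith [sq_nonneg z.im]
    simpa [hz, Complex.normSq_mul] using h1
  have hp := Complex.normSq_nonneg (x 0)
  have hq := Complex.normSq_nonneg (x 1)
  have hN := Complex.normSq_nonneg c
  nlinarith [sq_nonneg (a * Complex.normSq (x 0) - b * Complex.normSq (x 1)),
    sq_nonneg (a * Complex.normSq (x 0) + b * Complex.normSq (x 1)),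
    mul_nonneg hp hq, mul_nonneg ha hp, mul_nonneg hb hq,
    mul_nonneg (mul_nonneg hp hq) hN]

lemma psd2_to {P : Matrix (Fin 2) (Fin 2) ℂ} (hP : P.PosSemidef) :
    0 ≤ (P 0 0).re ∧ 0 ≤ (P 1 1).re ∧
      Complex.normSq (P 0 1) ≤ (P 0 0).re * (P 1 1).re := by
  have hH := hP.isHermitian
  have h00 : P 0 0 = ((P 0 0).re : ℂ) := (hH.coe_re_apply_self 0).symm
  have h11 : P 1 1 = ((P 1 1).re : ℂ) := (hH.coe_re_apply_self 1).symm
  have h10 : P 1 0 = star (P 0 1) := (hH.apply 1 0).symm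
  set a := (P 0 0).re with hadef
  set b := (P 1 1).re with hbdef
  set c := P 0 1
  set N := Complex.normSq c with hN
  have ha : 0 ≤ a := by
    have := hP.dotProduct_mulVec_nonneg ![1, 0]
    rw [Complex.nonneg_iff] at this
    have h := this.1
    simpa [dotProduct, mulVec, Fin.sum_univ_two] using h
  have hb : 0 ≤ b := by
    have := hP.dotProduct_mulVec_nonneg ![0, 1]
    rw [Complex.nonneg_iff] at this
    have h := this.1
    simpa [dotProduct, mulVec, Fin.sum_univ_two] using h
  refine ⟨ha, hb, ?_⟩
  have hval : ∀ t : ℝ, 0 ≤ a * N * t ^ 2 - 2 * N * t + b := by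
    intro t
    have h0 := hP.dotProduct_mulVec_nonneg ![-(t:ℂ) * c, 1]
    rw [Complex.nonneg_iff] at h0
    have h := h0.1
    have hexp : (star ![-(t:ℂ) * c, 1] ⬝ᵥ P *ᵥ ![-(t:ℂ) * c, 1]).re
        = a * N * t ^ 2 - 2 * N * t + b := by
      simp only [dotProduct, mulVec, Fin.sum_univ_two, Pi.star_apply,
        Matrix.cons_val_zero, Matrix.cons_val_one, Matrix.head_cons]
      rw [h00, h11, h10]
      simp only [Complex.add_re, Complex.mul_re, Complex.mul_im, Complex.add_im,
        Complex.ofReal_re, Complex.ofReal_im, Complex.star_def, _root_.map_mul, map_neg,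
        Complex.conj_ofReal, Complex.normSq_apply, Complex.neg_re, Complex.neg_im,
        Complex.conj_re, Complex.conj_im, Complex.one_re, Complex.one_im, hN]
      ring
    rw [hexp] at h
    exact h
  rcases eq_or_lt_of_le ha with heq | hlt
  · have hN0 : N = 0 := by
      by_contra hne
      have hNpos : 0 < N := lt_of_le_of_ne (Complex.normSq_nonneg c) (Ne.symm hne)
      have := hval ((b + 1) / (2 * N))
      rw [← heq] at this
      have h2N : 2 * N * ((b + 1) / (2 * N)) = b + 1 := by field_simp
      nlinarith
    rw [hN0]
    nlinarith
  · have := hval (1 / a)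
    have h1 : a * N * (1 / a) ^ 2 = N / a := by field_simp
    have h2 : 2 * N * (1 / a) = 2 * N / a := by ring
    rw [h1, h2] at this
    have h3 : N / a - 2 * N / a + b = (a * b - N) / a := by field_simp; ring
    rw [h3, le_div_iff₀ hlt] at this
    nlinarith

end Aux

/-- The standard symplectic form on `n` modes: block-diagonal with `n` blocks `[[0,1],[-1,0]]`. -/
noncomputable def OmegaM (n : ℕ) : Matrix (Fin (2*n)) (Fin (2*n)) ℝ :=
  Matrix.of fun i j =>
    if i.val + 1 = j.val ∧ i.val % 2 = 0 then (1 : ℝ)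
    else if j.val + 1 = i.val ∧ j.val % 2 = 0 then -1 else 0

/-- Complexification of a real matrix. -/
noncomputable def cplx {m p : Type*} (M : Matrix m p ℝ) : Matrix m p ℂ :=
  M.map (fun x => (x : ℂ))

lemma real_key {β w d : ℝ} (hβ : 0 < β) (hd0 : 0 ≤ d)
    (h1 : (w - β)^2 ≤ d^2) (h2 : (w + β)^2 ≤ d^2) : β + |w| ≤ d := by
  rcases abs_cases w with ⟨hw1, hw2⟩ | ⟨hw1, hw2⟩ <;> rw [hw1] <;> nlinarith

lemma OmegaM_skew (n : ℕ) (i j : Fin (2*n)) : OmegaM n j i = - OmegaM n i j := by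
  unfold OmegaM
  simp only [Matrix.of_apply]
  by_cases h1 : j.val + 1 = i.val ∧ j.val % 2 = 0 <;>
    by_cases h2 : i.val + 1 = j.val ∧ i.val % 2 = 0 <;>
    simp [h1, h2] <;> omega

set_option maxHeartbeats 1600000 in
theorem single_mode_simplified_implies_SDP
    (k nA : ℕ) (hk : 2 ≤ k) (hnA : 0 < nA)
    (V : Matrix (Fin (2*nA) ⊕ Fin (2*1)) (Fin (2*nA) ⊕ Fin (2*1)) ℝ)
    (hV : V.IsSymm)
    (hbona : (cplx V -
      Complex.I • cplx (Matrix.fromBlocks (OmegaM nA) 0 0 (OmegaM 1))).PosSemidef)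
    (h : (cplx V -
      Matrix.fromBlocks (Complex.I • cplx (OmegaM nA)) 0 0
        ((-(1 - 2/(k:ℂ)) * Complex.I) • cplx (OmegaM 1))).PosSemidef) :
    ∃ Δ : Matrix (Fin (2*1)) (Fin (2*1)) ℝ, Δ.IsSymm ∧
      (cplx Δ - Complex.I • cplx (OmegaM 1)).PosSemidef ∧
      (cplx V -
        Matrix.fromBlocks (Complex.I • cplx (OmegaM nA)) 0 0
          ((1 - 1/(k:ℂ)) • cplx Δ
            + (Complex.I/(k:ℂ)) • cplx (OmegaM 1))).PosSemidef := by
  classical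
  set Mc : Matrix (Fin (2*nA)) (Fin (2*nA)) ℂ :=
    cplx (V.toBlocks₁₁) - Complex.I • cplx (OmegaM nA) with hMc
  set Xc : Matrix (Fin (2*nA)) (Fin (2*1)) ℂ := cplx (V.toBlocks₁₂) with hXc
  set Bc : Matrix (Fin (2*1)) (Fin (2*1)) ℂ := cplx (V.toBlocks₂₂) with hBc
  set Ωc : Matrix (Fin (2*1)) (Fin (2*1)) ℂ := cplx (OmegaM 1) with hΩc
  -- block splitting
  have hsplit : ∀ W : Matrix (Fin (2*1)) (Fin (2*1)) ℂ,
      cplx V - Matrix.fromBlocks (Complex.I • cplx (OmegaM nA)) 0 0 W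
        = fromBlocks Mc Xc Xcᴴ (Bc - W) := by
    intro W
    ext i j
    rcases i with i | i <;> rcases j with j | j
    · simp [cplx, Mc, Matrix.fromBlocks, Matrix.toBlocks₁₁]
    · simp [cplx, Xc, Matrix.fromBlocks, Matrix.toBlocks₁₂]
    · have hsym := hV.apply (Sum.inl j) (Sum.inr i)
      simp [cplx, Xc, Matrix.fromBlocks, Matrix.toBlocks₁₂, Matrix.conjTranspose_apply, hsym]
    · simp [cplx, Bc, Matrix.fromBlocks, Matrix.toBlocks₂₂]
  -- Hermitian facts
  have hMcH : Mcᴴ = Mc := by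
    ext i j
    have hsym := hV.apply (Sum.inl i) (Sum.inl j)
    simp [Mc, cplx, Matrix.conjTranspose_apply, Matrix.toBlocks₁₁, Matrix.sub_apply,
      OmegaM_skew nA i j, hsym]
    ring
  -- hypotheses in block form
  have hb1 : cplx V - Complex.I • cplx (Matrix.fromBlocks (OmegaM nA) 0 0 (OmegaM 1))
      = fromBlocks Mc Xc Xcᴴ (Bc - Complex.I • Ωc) := by
    rw [← hsplit]
    congr 1
    ext i j
    rcases i with i | i <;> rcases j with j | j <;>
      simp [cplx, Matrix.fromBlocks, Ωc]
  have N1psd : (fromBlocks Mc Xc Xcᴴ (Bc - Complex.I • Ωc)).PosSemidef := hb1 ▸ hbona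
  have N2psd : (fromBlocks Mc Xc Xcᴴ
      (Bc - (-(1 - 2/(k:ℂ)) * Complex.I) • Ωc)).PosSemidef := hsplit _ ▸ h
  -- corner is PSD
  have hMcpsd : Mc.PosSemidef := by
    have := N1psd.submatrix Sum.inl
    have he : (fromBlocks Mc Xc Xcᴴ (Bc - Complex.I • Ωc)).submatrix Sum.inl Sum.inl = Mc := rfl
    rwa [he] at this
  -- solve Mc * Y = Xc
  have hexY : ∃ Y : Matrix (Fin (2*nA)) (Fin (2*1)) ℂ, Mc * Y = Xc := by
    have hcol : ∀ jj : Fin (2*1), ∃ y, Mc *ᵥ y = (fun i => Xc i jj) := by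
      intro jj
      apply exists_solution hMcH
      intro x hx
      have := blocks_ker N1psd x hx (Pi.single jj 1)
      have hcc : Xc *ᵥ Pi.single jj 1 = fun i => Xc i jj := by
        funext i
        simp [Matrix.mulVec_single]
      rwa [hcc] at this
    choose ys hys using hcol
    refine ⟨Matrix.of (fun i jj => ys jj i), ?_⟩
    ext i jj
    have := congrFun (hys jj) i
    simpa [Matrix.mul_apply, Matrix.mulVec, dotProduct] using this
  obtain ⟨Y, hMY⟩ := hexY
  set S : Matrix (Fin (2*1)) (Fin (2*1)) ℂ := Yᴴ * Mc * Y with hS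
  set T : Matrix (Fin (2*1)) (Fin (2*1)) ℂ := Bc - S with hT
  -- the two 2x2 conditions
  have hT1 : (T - Complex.I • Ωc).PosSemidef := by
    have := blocks_psd_T N1psd hMcH hMY
    have he : Bc - Complex.I • Ωc - Yᴴ * Mc * Y = T - Complex.I • Ωc := by
      rw [hT, hS]; abel
    rwa [he] at this
  have hT2 : (T + ((1 - 2/(k:ℂ)) * Complex.I) • Ωc).PosSemidef := by
    have := blocks_psd_T N2psd hMcH hMY
    have he : Bc - (-(1 - 2/(k:ℂ)) * Complex.I) • Ωc - Yᴴ * Mc * Y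
        = T + ((1 - 2/(k:ℂ)) * Complex.I) • Ωc := by
      rw [hT, hS, neg_mul, neg_smul, sub_neg_eq_add]; abel
    rwa [he] at this
  -- entries of Omega
  have hO00 : Ωc 0 0 = 0 := by norm_num [Ωc, cplx, OmegaM]
  have hO01 : Ωc 0 1 = 1 := by norm_num [Ωc, cplx, OmegaM]
  have hO10 : Ωc 1 0 = -1 := by norm_num [Ωc, cplx, OmegaM]
  have hO11 : Ωc 1 1 = 0 := by norm_num [Ωc, cplx, OmegaM]
  -- T is Hermitian
  have hBcH : Bcᴴ = Bc := by
    ext i j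
    have hsym := hV.apply (Sum.inr i) (Sum.inr j)
    simp [Bc, cplx, Matrix.conjTranspose_apply, Matrix.toBlocks₂₂, hsym]
  have hSH : Sᴴ = S := by
    rw [hS, conjTranspose_mul, conjTranspose_mul, conjTranspose_conjTranspose, hMcH,
      Matrix.mul_assoc]
  have hTH : T.IsHermitian := by
    show Tᴴ = T
    rw [hT, conjTranspose_sub, hBcH, hSH]
  -- scalar data
  set a : ℝ := (T 0 0).re with hadef
  set b : ℝ := (T 1 1).re with hbdef
  set u : ℝ := (T 0 1).re with hudef
  set v : ℝ := (T 0 1).im with hvdef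
  set kr : ℝ := (k : ℝ) with hkr
  have hk2 : (2:ℝ) ≤ kr := by rw [hkr]; exact_mod_cast hk
  have hkpos : (0:ℝ) < kr := by linarith
  have hkc0 : (k : ℂ) ≠ 0 := by
    simp only [Ne, Nat.cast_eq_zero]
    omega
  have key1 := psd2_to hT1
  rw [show (T - Complex.I • Ωc) 0 0 = T 0 0 by
        simp [Matrix.sub_apply, Matrix.smul_apply, hO00],
      show (T - Complex.I • Ωc) 1 1 = T 1 1 by
        simp [Matrix.sub_apply, Matrix.smul_apply, hO11],
      show (T - Complex.I • Ωc) 0 1 = T 0 1 - Complex.I by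
        simp [Matrix.sub_apply, Matrix.smul_apply, hO01]] at key1
  obtain ⟨ha, hb, h1⟩ := key1
  rw [show Complex.normSq (T 0 1 - Complex.I) = u^2 + (v - 1)^2 by
        simp [Complex.normSq_apply, Complex.sub_re, Complex.sub_im, Complex.I_re,
          Complex.I_im, hudef, hvdef]
        ring] at h1
  have key2 := psd2_to hT2
  rw [show (T + ((1 - 2/(k:ℂ)) * Complex.I) • Ωc) 0 0 = T 0 0 by
        simp [Matrix.add_apply, Matrix.smul_apply, hO00],
      show (T + ((1 - 2/(k:ℂ)) * Complex.I) • Ωc) 1 1 = T 1 1 by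
        simp [Matrix.add_apply, Matrix.smul_apply, hO11],
      show (T + ((1 - 2/(k:ℂ)) * Complex.I) • Ωc) 0 1
          = T 0 1 + ((1 - 2/kr : ℝ) : ℂ) * Complex.I by
        have hcast : ((1:ℂ) - 2/(k:ℂ)) = (((1 - 2/kr : ℝ)) : ℂ) := by
          rw [hkr]; push_cast; ring
        simp [Matrix.add_apply, Matrix.smul_apply, hO01, hcast]] at key2
  obtain ⟨-, -, h2⟩ := key2
  rw [show Complex.normSq (T 0 1 + ((1 - 2/kr : ℝ) : ℂ) * Complex.I)
        = u^2 + (v + (1 - 2/kr))^2 by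
        simp [Complex.normSq_apply, Complex.add_re, Complex.add_im, Complex.mul_re,
          Complex.mul_im, Complex.I_re, Complex.I_im, Complex.ofReal_re, Complex.ofReal_im,
          hudef, hvdef]
        ring] at h2
  -- real analysis part
  set β : ℝ := 1 - 1/kr with hβdef
  set w : ℝ := v - 1/kr with hwdef
  set D : ℝ := a * b - u^2 with hDdef
  have hD0 : 0 ≤ D := by nlinarith [sq_nonneg (v - 1)]
  set d : ℝ := Real.sqrt D with hddef
  have hd0 : 0 ≤ d := Real.sqrt_nonneg D
  have hd2 : d^2 = D := Real.sq_sqrt hD0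
  have hβpos : 0 < β := by
    have : 1/kr < 1 := by rw [div_lt_one hkpos]; linarith
    rw [hβdef]; linarith
  have hD1 : (w - β)^2 ≤ d^2 := by
    have he : w - β = v - 1 := by rw [hwdef, hβdef]; ring
    rw [he, hd2, hDdef]; linarith
  have hD2 : (w + β)^2 ≤ d^2 := by
    have he : w + β = v + (1 - 2/kr) := by rw [hwdef, hβdef]; ring
    rw [he, hd2, hDdef]; linarith
  have hd_ge : β + |w| ≤ d := real_key hβpos hd0 hD1 hD2
  have hd_pos : 0 < d := by
    have := abs_nonneg w
    linarith
  have hdne : d ≠ 0 := ne_of_gt hd_pos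
  have hdβ : 0 ≤ d - β := by
    have := abs_nonneg w
    linarith
  have hab : a * b = u^2 + d^2 := by rw [hd2, hDdef]; ring
  -- the witness
  set Δ₀ : Matrix (Fin (2*1)) (Fin (2*1)) ℝ := Matrix.of ![![a/d, u/d], ![u/d, b/d]]
    with hΔ₀def
  have hΔ00 : Δ₀ 0 0 = a/d := rfl
  have hΔ01 : Δ₀ 0 1 = u/d := rfl
  have hΔ10 : Δ₀ 1 0 = u/d := rfl
  have hΔ11 : Δ₀ 1 1 = b/d := rfl
  have hΔsymm : Δ₀.IsSymm := by
    show Δ₀ᵀ = Δ₀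
    ext i j
    fin_cases i <;> fin_cases j <;> rfl
  have hΔherm : (cplx Δ₀)ᴴ = cplx Δ₀ := by
    ext i j
    simp only [Matrix.conjTranspose_apply, cplx, Matrix.map_apply, Complex.star_def,
      Complex.conj_ofReal, hΔsymm.apply i j]
  have hΩH : Ωcᴴ = -Ωc := by
    ext i j
    simp [Ωc, cplx, Matrix.conjTranspose_apply, OmegaM_skew 1 i j]
  refine ⟨Δ₀, hΔsymm, ?_, ?_⟩
  · -- Δ₀ is a bona fide covariance matrix
    apply psd2_of
    · show _ᴴ = _
      rw [conjTranspose_sub, hΔherm, Matrix.conjTranspose_smul, hΩH]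
      simp
    · rw [show (cplx Δ₀ - Complex.I • Ωc) 0 0 = ((a/d : ℝ) : ℂ) by
        simp [Matrix.sub_apply, Matrix.smul_apply, hO00, cplx, hΔ00]]
      simp only [Complex.ofReal_re]
      positivity
    · rw [show (cplx Δ₀ - Complex.I • Ωc) 1 1 = ((b/d : ℝ) : ℂ) by
        simp [Matrix.sub_apply, Matrix.smul_apply, hO11, cplx, hΔ11]]
      simp only [Complex.ofReal_re]
      positivity
    · rw [show (cplx Δ₀ - Complex.I • Ωc) 0 1 = ((u/d : ℝ) : ℂ) - Complex.I by
        simp [Matrix.sub_apply, Matrix.smul_apply, hO01, cplx, hΔ01],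
        show (cplx Δ₀ - Complex.I • Ωc) 0 0 = ((a/d : ℝ) : ℂ) by
        simp [Matrix.sub_apply, Matrix.smul_apply, hO00, cplx, hΔ00],
        show (cplx Δ₀ - Complex.I • Ωc) 1 1 = ((b/d : ℝ) : ℂ) by
        simp [Matrix.sub_apply, Matrix.smul_apply, hO11, cplx, hΔ11]]
      simp only [Complex.ofReal_re, Complex.normSq_apply, Complex.sub_re, Complex.sub_im,
        Complex.ofReal_im, Complex.I_re, Complex.I_im]
      have hgoal : (u/d)^2 + 1 = (a/d)*(b/d) := by
        field_simp
        first
        | linear_combination (-(d^2)) * hab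
        | linear_combination (d^2) * hab
        | linear_combination hab
        | linear_combination (-1 : ℝ) * hab
      nlinarith [hgoal]
  · -- the extendibility witness condition
    rw [hsplit]
    have hβc : ((1:ℂ) - 1/(k:ℂ)) = ((β : ℝ) : ℂ) := by
      rw [hβdef, hkr]; push_cast; ring
    have hIk : Complex.I/(k:ℂ) = ((1/kr : ℝ) : ℂ) * Complex.I := by
      rw [hkr]; push_cast; ring
    set W : Matrix (Fin (2*1)) (Fin (2*1)) ℂ :=
      (1 - 1/(k:ℂ)) • cplx Δ₀ + (Complex.I/(k:ℂ)) • Ωc with hWdef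
    have hWH : Wᴴ = W := by
      rw [hWdef, conjTranspose_add, Matrix.conjTranspose_smul, Matrix.conjTranspose_smul,
        hΔherm, hΩH]
      congr 1
      · congr 1
        simp [Complex.ext_iff]
      · rw [smul_neg, ← neg_smul]
        congr 1
        simp [Complex.ext_iff, neg_div]
    apply psd_of_blocks hMcpsd ?_ hMY ?_
    · rw [conjTranspose_sub, hBcH, hWH]
    · have he : Bc - W - Yᴴ * Mc * Y = T - W := by rw [hT, hS]; abel
      rw [he]
      -- entries of T
      have hTa : T 0 0 = ((a : ℝ) : ℂ) := (hTH.coe_re_apply_self 0).symm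
      have hTb : T 1 1 = ((b : ℝ) : ℂ) := (hTH.coe_re_apply_self 1).symm
      have hW00 : W 0 0 = ((β * (a/d) : ℝ) : ℂ) := by
        rw [hWdef, Matrix.add_apply, Matrix.smul_apply, Matrix.smul_apply, hO00,
          show (cplx Δ₀) 0 0 = ((a/d : ℝ) : ℂ) from by simp [cplx, hΔ00], hβc]
        simp only [smul_eq_mul, mul_zero, add_zero]
        push_cast
        ring
      have hW11 : W 1 1 = ((β * (b/d) : ℝ) : ℂ) := by
        rw [hWdef, Matrix.add_apply, Matrix.smul_apply, Matrix.smul_apply, hO11,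
          show (cplx Δ₀) 1 1 = ((b/d : ℝ) : ℂ) from by simp [cplx, hΔ11], hβc]
        simp only [smul_eq_mul, mul_zero, add_zero]
        push_cast
        ring
      have hW01 : W 0 1 = ((β * (u/d) : ℝ) : ℂ) + ((1/kr : ℝ) : ℂ) * Complex.I := by
        rw [hWdef, Matrix.add_apply, Matrix.smul_apply, Matrix.smul_apply, hO01,
          show (cplx Δ₀) 0 1 = ((u/d : ℝ) : ℂ) from by simp [cplx, hΔ01], hβc, hIk]
        simp only [smul_eq_mul, mul_one]
        push_cast
        ring
      apply psd2_of
      · show _ᴴ = _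
        rw [conjTranspose_sub, hTH.eq, hWH]
      · rw [show (T - W) 0 0 = T 0 0 - W 0 0 from rfl, hTa, hW00]
        simp only [Complex.sub_re, Complex.ofReal_re]
        have : a - β * (a/d) = a * ((d - β)/d) := by field_simp
        rw [this]
        positivity
      · rw [show (T - W) 1 1 = T 1 1 - W 1 1 from rfl, hTb, hW11]
        simp only [Complex.sub_re, Complex.ofReal_re]
        have : b - β * (b/d) = b * ((d - β)/d) := by field_simp
        rw [this]
        positivity
      · rw [show (T - W) 0 0 = T 0 0 - W 0 0 from rfl, hTa, hW00,
          show (T - W) 1 1 = T 1 1 - W 1 1 from rfl, hTb, hW11,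
          show (T - W) 0 1 = T 0 1 - W 0 1 from rfl, hW01]
        have hre : (T 0 1 - (((β * (u/d) : ℝ) : ℂ) + ((1/kr : ℝ) : ℂ) * Complex.I)).re
            = u - β * (u/d) := by
          simp [Complex.sub_re, Complex.add_re, Complex.mul_re, Complex.I_re, Complex.I_im,
            Complex.ofReal_re, Complex.ofReal_im, hudef]
        have him : (T 0 1 - (((β * (u/d) : ℝ) : ℂ) + ((1/kr : ℝ) : ℂ) * Complex.I)).im
            = w := by
          simp [Complex.sub_im, Complex.add_im, Complex.mul_im, Complex.I_re, Complex.I_im,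
            Complex.ofReal_re, Complex.ofReal_im, hvdef, hwdef]
        rw [Complex.normSq_apply, hre, him]
        simp only [Complex.sub_re, Complex.ofReal_re]
        -- final inequality
        have hw2 : w^2 ≤ (d - β)^2 := by
          nlinarith [abs_nonneg w, _root_.sq_abs w]
        have hee : ∀ t : ℝ, t - β * (t/d) = t * ((d - β)/d) := by
          intro t; field_simp
        rw [hee u, hee a, hee b]
        set e : ℝ := (d - β)/d with hedef
        have hde : d * e = d - β := by rw [hedef]; field_simp
        have hd2' : a*b - u^2 = d^2 := by rw [hd2, hDdef]
        have h3 : (d - β)^2 = (a*b - u^2) * e^2 := by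
          rw [hd2', ← hde]; ring
        have h4 : a*e*(b*e) - u*e*(u*e) = (d - β)^2 := by rw [h3]; ring
        linarith [hw2, h4]
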